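/- Suppose ε > 0, let xy be an edge of T with x ∈ W_1 and y ∈ U_1 \ W_1, and let I' be the instance obtained from I by expanding the edge xy by ε. If (s_1,…,s_k) is a solution of I, then (s_1,…,s_k) is also a solution of I'. -/

import Mathlib

open SimpleGraph Walk Sum

set_option linter.unusedSectionVars false
namespace ExpHelp

variable {V : Type*} [DecidableEq V] {T : SimpleGraph V}

def wsum (w : Sym2 V → ℝ) {u v : V} (p : T.Walk u v) : ℝ := (p.edges.map w).sum

lemma wsum_nonneg {w : Sym2 V → ℝ} (hw : ∀ e ∈ T.edgeSet, 0 < w e) {u v : V}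
    (p : T.Walk u v) : 0 ≤ wsum w p := by
  apply List.sum_nonneg
  intro a ha
  obtain ⟨e, he, rfl⟩ := List.mem_map.1 ha
  exact (hw e (p.edges_subset_edgeSet he)).le

section d
variable (hT : T.IsTree) {w : Sym2 V → ℝ} (hw : ∀ e ∈ T.edgeSet, 0 < w e)
  {d : V → V → ℝ} (hd : ∀ (u v : V) (p : T.Walk u v), p.IsPath → wsum w p = d u v)

include hT hd

lemma path_eq {u v : V} {p q : T.Walk u v} (hp : p.IsPath) (hq : q.IsPath) : p = q :=
  ((hT.existsUnique_path u v).unique hp hq)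

lemma d_self (u : V) : d u u = 0 := by
  have := hd u u Walk.nil IsPath.nil
  simpa [wsum] using this.symm

lemma d_symm (u v : V) : d u v = d v u := by
  obtain ⟨p, hp, -⟩ := hT.existsUnique_path u v
  rw [← hd u v p hp, ← hd v u p.reverse hp.reverse]
  simp [wsum, edges_reverse, List.map_reverse, List.sum_reverse]

include hw in
lemma d_nonneg (u v : V) : 0 ≤ d u v := by
  obtain ⟨p, hp, -⟩ := hT.existsUnique_path u v
  rw [← hd u v p hp]; exact wsum_nonneg hw p

lemma d_split {u v c : V} (p : T.Walk u v) (hp : p.IsPath) (hc : c ∈ p.support) :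
    d u v = d u c + d c v := by
  rw [← hd u c (p.takeUntil c hc) (hp.takeUntil hc),
      ← hd c v (p.dropUntil c hc) (hp.dropUntil hc),
      ← hd u v p hp]
  have h2 : wsum w ((p.takeUntil c hc).append (p.dropUntil c hc)) = wsum w p := by
    rw [p.take_spec hc]
  rw [← h2]; simp only [wsum, edges_append, List.map_append, List.sum_append]

lemma d_edge {u v : V} (h : T.Adj u v) : d u v = w s(u, v) := by
  have hp : (Walk.cons h Walk.nil).IsPath := by simp [h.ne]
  have := hd u v (Walk.cons h Walk.nil) hp
  simpa [wsum] using this.symm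

include hw in
lemma d_edge_le (a : V) {u v : V} (h : T.Adj u v) : d a v ≤ d a u + w s(u, v) := by
  obtain ⟨p, hp, -⟩ := hT.existsUnique_path a u
  by_cases hv : v ∈ p.support
  · have h1 : d a u = d a v + d v u := d_split hT hd p hp hv
    have h2 : 0 ≤ d v u := d_nonneg hT hw hd v u
    have h3 : 0 < w s(u,v) := hw _ (T.mem_edgeSet.2 h)
    linarith
  · have hq : (p.concat h).IsPath := by
      rw [isPath_def, support_concat]
      exact List.Nodup.append hp.support_nodup (by simp) (List.disjoint_singleton.2 hv)
    have := hd a v (p.concat h) hq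
    rw [← this, ← hd a u p hp]
    simp [wsum, edges_concat]

include hw in
lemma d_walk_le (a : V) {c b : V} (q : T.Walk c b) : d a b ≤ d a c + wsum w q := by
  induction q with
  | nil => simp [wsum]
  | @cons c c' b h q ih =>
    have := d_edge_le hT hw hd a h
    have : d a b ≤ (d a c + w s(c, c')) + wsum w q := le_trans ih (by linarith)
    simpa [wsum, add_assoc] using this

include hw in
lemma d_triangle (a c b : V) : d a b ≤ d a c + d c b := by
  obtain ⟨q, hq, -⟩ := hT.existsUnique_path c b
  have := d_walk_le hT hw hd a q
  rwa [hd c b q hq] at this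

end d

/-- `u` is on the `x`-side of the edge `xy`. -/
def onX (T : SimpleGraph V) (x y u : V) : Prop :=
  ∀ p : T.Walk u x, p.IsPath → y ∉ p.support

section side
variable (hT : T.IsTree) {w : Sym2 V → ℝ} (hw : ∀ e ∈ T.edgeSet, 0 < w e)
  {d : V → V → ℝ} (hd : ∀ (u v : V) (p : T.Walk u v), p.IsPath → wsum w p = d u v)
  {x y : V} (hxy : T.Adj x y)

include hT hd hxy

lemma pathX {u : V} (h : onX T x y u) : ∃ p : T.Walk u x, p.IsPath ∧ y ∉ p.support := by
  obtain ⟨p, hp, -⟩ := hT.existsUnique_path u x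
  exact ⟨p, hp, h p hp⟩

lemma sideX {u : V} (h : onX T x y u) : d u y = d u x + w s(x, y) := by
  obtain ⟨p, hp, hyp⟩ := pathX hT hd hxy h
  have hq : (p.concat hxy).IsPath := by
    rw [isPath_def, support_concat]
    exact List.Nodup.append hp.support_nodup (by simp) (List.disjoint_singleton.2 hyp)
  have := hd u y (p.concat hxy) hq
  rw [← this, ← hd u x p hp]
  simp [wsum, edges_concat]

include hw in
lemma sideY {u : V} (h : ¬ onX T x y u) :
    d u x = d u y + w s(x, y) ∧ ∃ p : T.Walk u y, p.IsPath ∧ x ∉ p.support := by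
  simp only [onX, not_forall] at h
  obtain ⟨p, hp, hyp⟩ := h
  rw [not_not] at hyp
  have hsplit : d u x = d u y + d y x := d_split hT hd p hp hyp
  have hyx : d y x = w s(x, y) := by
    rw [d_edge hT hd hxy.symm, Sym2.eq_swap]
  refine ⟨by rw [hsplit, hyx], ?_⟩
  refine ⟨p.takeUntil y hyp, hp.takeUntil hyp, fun hxm => ?_⟩
  have h2 : d u y = d u x + d x y :=
    d_split hT hd (p.takeUntil y hyp) (hp.takeUntil hyp) hxm
  have h3 : d x y = w s(x, y) := d_edge hT hd hxy
  have h4 : 0 < w s(x, y) := hw _ (T.mem_edgeSet.2 hxy)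
  linarith [hsplit, hyx]

include hw in
lemma not_onX_iff {u : V} : ¬ onX T x y u ↔ d u x = d u y + w s(x, y) := by
  have h4 : 0 < w s(x, y) := hw _ (T.mem_edgeSet.2 hxy)
  constructor
  · exact fun h => (sideY hT hw hd hxy h).1
  · intro h h'
    have := sideX hT hd hxy h'
    linarith

include hw in
lemma onX_iff {u : V} : onX T x y u ↔ d u y = d u x + w s(x, y) := by
  have h4 : 0 < w s(x, y) := hw _ (T.mem_edgeSet.2 hxy)
  constructor
  · exact fun h => sideX hT hd hxy h
  · intro h
    by_contra h'
    have := (sideY hT hw hd hxy h').1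
    linarith

lemma switch {a b : V} (h : T.Adj a b) (ha : onX T x y a) (hb : b ≠ y) : onX T x y b := by
  obtain ⟨p, hp, hyp⟩ := pathX hT hd hxy ha
  by_cases hbp : b ∈ p.support
  · intro r hr
    have hq : (p.dropUntil b hbp).IsPath := hp.dropUntil hbp
    rw [path_eq hT hd hr hq]
    exact fun hm => hyp (p.support_dropUntil_subset hbp hm)
  · intro r hr
    have hq : (Walk.cons h.symm p).IsPath := (cons_isPath_iff _ _).2 ⟨hp, hbp⟩
    rw [path_eq hT hd hr hq]
    simp only [support_cons, List.mem_cons]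
    rintro (rfl | hm)
    · exact hb rfl
    · exact hyp hm

lemma nbr_y {a : V} (h : T.Adj a y) (ha : onX T x y a) : a = x := by
  obtain ⟨p, hp, hyp⟩ := pathX hT hd hxy ha
  have hq : (Walk.cons h.symm p).IsPath := (cons_isPath_iff _ _).2 ⟨hp, hyp⟩
  have hone : (Walk.cons hxy.symm (Walk.nil : T.Walk x x)).IsPath := by
    simp [hxy.ne.symm]
  have := path_eq hT hd hq hone
  have hlen := congrArg Walk.length this
  simp only [length_cons, length_nil] at hlen
  exact Walk.eq_of_length_eq_zero (p := p) (by omega)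

lemma cross_mem : ∀ {u v : V} (p : T.Walk u v), p.IsPath →
    onX T x y u → ¬ onX T x y v → y ∈ p.support := by
  intro u v p
  induction p with
  | nil => exact fun _ h1 h2 => absurd h1 h2
  | @cons u u₁ v h p ih =>
    intro hp hu hv
    rcases eq_or_ne u₁ y with rfl | hne
    · simp
    · have h1 : onX T x y u₁ := switch hT hd hxy h hu hne
      have := ih ((cons_isPath_iff _ _).1 hp).1 h1 hv
      simp [this]

lemma cross_d {u v : V} (hu : onX T x y u) (hv : ¬ onX T x y v) :
    d u v = d u x + w s(x, y) + d y v := by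
  obtain ⟨p, hp, -⟩ := hT.existsUnique_path u v
  have hy : y ∈ p.support := cross_mem hT hd hxy p hp hu hv
  rw [d_split hT hd p hp hy, sideX hT hd hxy hu]

include hw in
lemma sameX_not_mem {u v : V} (hu : onX T x y u) (hv : onX T x y v)
    (p : T.Walk u v) (hp : p.IsPath) : y ∉ p.support := by
  intro hy
  have h1 : d u v = d u y + d y v := d_split hT hd p hp hy
  have h2 : d u y = d u x + w s(x, y) := sideX hT hd hxy hu
  have h3 : d v y = d v x + w s(x, y) := sideX hT hd hxy hv
  have h4 : d y v = d v y := d_symm hT hd y v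
  have h5 : d x v = d v x := d_symm hT hd x v
  have h6 : d u v ≤ d u x + d x v := d_triangle hT hw hd u x v
  have h7 : 0 < w s(x, y) := hw _ (T.mem_edgeSet.2 hxy)
  linarith

include hw in
lemma sameY_not_mem {u v : V} (hu : ¬ onX T x y u) (hv : ¬ onX T x y v)
    (p : T.Walk u v) (hp : p.IsPath) : x ∉ p.support := by
  intro hx
  have h1 : d u v = d u x + d x v := d_split hT hd p hp hx
  have h2 : d u x = d u y + w s(x, y) := (sideY hT hw hd hxy hu).1
  have h3 : d v x = d v y + w s(x, y) := (sideY hT hw hd hxy hv).1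
  have h4 : d y v = d v y := d_symm hT hd y v
  have h5 : d x v = d v x := d_symm hT hd x v
  have h6 : d u v ≤ d u y + d y v := d_triangle hT hw hd u y v
  have h7 : 0 < w s(x, y) := hw _ (T.mem_edgeSet.2 hxy)
  linarith

lemma memX {u : V} (p : T.Walk u x) (hp : p.IsPath) (hyp : y ∉ p.support) :
    ∀ a ∈ p.support, onX T x y a := by
  intro a ha r hr
  have hq : (p.dropUntil a ha).IsPath := hp.dropUntil ha
  rw [path_eq hT hd hr hq]
  exact fun hm => hyp (p.support_dropUntil_subset ha hm)

lemma memY {v : V} (p : T.Walk y v) (hp : p.IsPath) (hxp : x ∉ p.support) :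
    ∀ b ∈ p.support, ¬ onX T x y b := by
  intro b hb honb
  set t := (p.takeUntil b hb).reverse with ht
  have htp : t.IsPath := (hp.takeUntil hb).reverse
  have hxt : x ∉ t.support := by
    rw [ht, support_reverse, List.mem_reverse]
    exact fun hm => hxp (p.support_takeUntil_subset hb hm)
  have hq : (t.concat hxy.symm).IsPath := by
    rw [isPath_def, support_concat]
    exact List.Nodup.append htp.support_nodup (by simp) (List.disjoint_singleton.2 hxt)
  have hym : y ∈ (t.concat hxy.symm).support := by
    rw [support_concat]
    exact List.mem_append_left _ t.end_mem_support
  exact honb (t.concat hxy.symm) hq hym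

end side

section lift
variable {x y : V} {T' : SimpleGraph (V ⊕ Unit)}

lemma sum_map_inl {w : Sym2 V → ℝ} (w' : Sym2 (V ⊕ Unit) → ℝ)
    (hw'old : ∀ a b : V, w' s(Sum.inl a, Sum.inl b) = w s(a, b)) (l : List (Sym2 V)) :
    ((l.map (Sym2.map Sum.inl)).map w').sum = (l.map w).sum := by
  induction l with
  | nil => simp
  | cons e l ih =>
    simp only [List.map_cons, List.sum_cons, ih]
    congr 1
    induction e using Sym2.ind with
    | _ a b => simpa [Sym2.map_pair_eq] using hw'old a b

variable (hT'adj : ∀ a b : V ⊕ Unit, T'.Adj a b ↔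
      ((∃ u v : V, a = Sum.inl u ∧ b = Sum.inl v ∧ T.Adj u v ∧ s(u, v) ≠ s(x, y)) ∨
        (a = Sum.inl x ∧ b = Sum.inr ()) ∨ (a = Sum.inr () ∧ b = Sum.inl x) ∨
        (a = Sum.inl y ∧ b = Sum.inr ()) ∨ (a = Sum.inr () ∧ b = Sum.inl y)))

include hT'adj in
lemma lift_walk {u v : V} (p : T.Walk u v) (hp : p.IsPath) (he : s(x, y) ∉ p.edges) :
    ∃ q : T'.Walk (Sum.inl u) (Sum.inl v), q.IsPath ∧
      q.support = p.support.map Sum.inl ∧ q.edges = p.edges.map (Sym2.map Sum.inl) := by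
  have hpe : ∀ e ∈ p.edges, e ∈ (T.deleteEdges {s(x, y)}).edgeSet := by
    intro e hep
    rw [edgeSet_deleteEdges]
    exact ⟨p.edges_subset_edgeSet hep, by
      simp only [Set.mem_singleton_iff]
      exact fun h => he (h ▸ hep)⟩
  let φ : T.deleteEdges {s(x, y)} →g T' := by
    refine ⟨Sum.inl, ?_⟩
    intro a b hab
    rw [SimpleGraph.deleteEdges_adj, Set.mem_singleton_iff] at hab
    exact (hT'adj _ _).2 (Or.inl ⟨a, b, rfl, rfl, hab.1, hab.2⟩)
  refine ⟨(p.transfer _ hpe).map φ, ?_, ?_, ?_⟩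
  · exact Walk.map_isPath_of_injective Sum.inl_injective (hp.transfer hpe)
  · rw [Walk.support_map, Walk.support_transfer]; rfl
  · rw [Walk.edges_map, Walk.edges_transfer]; rfl

end lift

section dist
variable (hT : T.IsTree) {w : Sym2 V → ℝ} (hw : ∀ e ∈ T.edgeSet, 0 < w e)
  {d : V → V → ℝ} (hd : ∀ (u v : V) (p : T.Walk u v), p.IsPath → wsum w p = d u v)
  {x y : V} (hxy : T.Adj x y)
  {T' : SimpleGraph (V ⊕ Unit)}
  (hT'adj : ∀ a b : V ⊕ Unit, T'.Adj a b ↔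
      ((∃ u v : V, a = Sum.inl u ∧ b = Sum.inl v ∧ T.Adj u v ∧ s(u, v) ≠ s(x, y)) ∨
        (a = Sum.inl x ∧ b = Sum.inr ()) ∨ (a = Sum.inr () ∧ b = Sum.inl x) ∨
        (a = Sum.inl y ∧ b = Sum.inr ()) ∨ (a = Sum.inr () ∧ b = Sum.inl y)))
  {w' : Sym2 (V ⊕ Unit) → ℝ}
  (hw'old : ∀ u v : V, w' s(Sum.inl u, Sum.inl v) = w s(u, v))
  (hw'x : w' s(Sum.inl x, Sum.inr ()) = w s(x, y))
  {ε : ℝ} (hw'y : w' s(Sum.inl y, Sum.inr ()) = ε)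
  {d' : V ⊕ Unit → V ⊕ Unit → ℝ}
  (hd' : ∀ (a b : V ⊕ Unit) (p : T'.Walk a b), p.IsPath → (p.edges.map w').sum = d' a b)

include hT hw hd hxy hT'adj hw'old hd'

lemma d'_same {u v : V} (huv : onX T x y u ↔ onX T x y v) :
    d' (Sum.inl u) (Sum.inl v) = d u v := by
  obtain ⟨p, hp, -⟩ := hT.existsUnique_path u v
  have he : s(x, y) ∉ p.edges := by
    by_cases hu : onX T x y u
    · intro hm
      exact sameX_not_mem hT hw hd hxy hu (huv.1 hu) p hp (p.snd_mem_support_of_mem_edges hm)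
    · intro hm
      exact sameY_not_mem hT hw hd hxy hu (fun hv => hu (huv.2 hv)) p hp
        (p.fst_mem_support_of_mem_edges hm)
  obtain ⟨q, hq, -, hqe⟩ := lift_walk hT'adj p hp he
  rw [← hd' _ _ q hq, hqe, sum_map_inl w' hw'old]
  exact hd u v p hp

lemma adj_x_mid : T'.Adj (Sum.inl x) (Sum.inr ()) :=
  (hT'adj _ _).2 (Or.inr (Or.inl ⟨rfl, rfl⟩))

lemma adj_y_mid : T'.Adj (Sum.inl y) (Sum.inr ()) :=
  (hT'adj _ _).2 (Or.inr (Or.inr (Or.inr (Or.inl ⟨rfl, rfl⟩))))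

include hw'x hw'y in
lemma d'_cross {u v : V} (hu : onX T x y u) (hv : ¬ onX T x y v) :
    d' (Sum.inl u) (Sum.inl v) = d u v + ε ∧ d' (Sum.inl v) (Sum.inl u) = d u v + ε := by
  obtain ⟨p₁, hp₁, hyp₁⟩ := pathX hT hd hxy hu
  obtain ⟨-, p₂', hp₂', hxp₂'⟩ := sideY hT hw hd hxy hv
  set p₂ := p₂'.reverse with hp2def
  have hp₂ : p₂.IsPath := hp₂'.reverse
  have hxp₂ : x ∉ p₂.support := by
    rw [hp2def, support_reverse, List.mem_reverse]; exact hxp₂'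
  have he₁ : s(x, y) ∉ p₁.edges := fun hm => hyp₁ (p₁.snd_mem_support_of_mem_edges hm)
  have he₂ : s(x, y) ∉ p₂.edges := fun hm => hxp₂ (p₂.fst_mem_support_of_mem_edges hm)
  obtain ⟨q₁, hq₁, hq₁s, hq₁e⟩ := lift_walk hT'adj p₁ hp₁ he₁
  obtain ⟨q₂, hq₂, hq₂s, hq₂e⟩ := lift_walk hT'adj p₂ hp₂ he₂
  have hax : T'.Adj (Sum.inl x) (Sum.inr ()) := (hT'adj _ _).2 (Or.inr (Or.inl ⟨rfl, rfl⟩))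
  have hay : T'.Adj (Sum.inr ()) (Sum.inl y) :=
    ((hT'adj _ _).2 (Or.inr (Or.inr (Or.inr (Or.inl ⟨rfl, rfl⟩))))).symm
  set Q := q₁.append (Walk.cons hax (Walk.cons hay q₂)) with hQdef
  have hQs : Q.support = p₁.support.map Sum.inl ++ (Sum.inr () :: p₂.support.map Sum.inl) := by
    rw [hQdef, support_append, hq₁s]
    simp [hq₂s]
  have hQp : Q.IsPath := by
    rw [isPath_def, hQs]
    refine List.Nodup.append (hp₁.support_nodup.map Sum.inl_injective) ?_ ?_
    · rw [List.nodup_cons]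
      exact ⟨by simp, hp₂.support_nodup.map Sum.inl_injective⟩
    · intro c hc1 hc2
      obtain ⟨a, ha, rfl⟩ := List.mem_map.1 hc1
      rcases List.mem_cons.1 hc2 with h | h
      · simp at h
      · obtain ⟨b, hb, hba⟩ := List.mem_map.1 h
        obtain rfl := Sum.inl_injective hba
        exact memY hT hd hxy p₂ hp₂ hxp₂ b hb (memX hT hd hxy p₁ hp₁ hyp₁ b ha)
  have hQe : (Q.edges.map w').sum = d u v + ε := by
    rw [hQdef, edges_append, edges_cons, edges_cons, List.map_append, List.sum_append,
      List.map_cons, List.sum_cons, List.map_cons, List.sum_cons, hq₁e, hq₂e,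
      sum_map_inl w' hw'old, sum_map_inl w' hw'old]
    have h1 : (List.map w p₁.edges).sum = d u x := hd u x p₁ hp₁
    have h2 : (List.map w p₂.edges).sum = d y v := hd y v p₂ hp₂
    have h3 : w' s(Sum.inr (), Sum.inl y) = ε := by rw [Sym2.eq_swap]; exact hw'y
    have h4 := cross_d hT hd hxy hu hv
    rw [h1, h2, hw'x, h3, h4]; ring
  constructor
  · rw [← hd' _ _ Q hQp, hQe]
  · rw [← hd' _ _ Q.reverse hQp.reverse, edges_reverse, List.map_reverse, List.sum_reverse, hQe]

include hw'x in
lemma d'_mid_X {u : V} (hu : onX T x y u) :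
    d' (Sum.inl u) (Sum.inr ()) = d u x + w s(x, y) := by
  obtain ⟨p₁, hp₁, hyp₁⟩ := pathX hT hd hxy hu
  have he₁ : s(x, y) ∉ p₁.edges := fun hm => hyp₁ (p₁.snd_mem_support_of_mem_edges hm)
  obtain ⟨q₁, hq₁, hq₁s, hq₁e⟩ := lift_walk hT'adj p₁ hp₁ he₁
  have hax : T'.Adj (Sum.inl x) (Sum.inr ()) := (hT'adj _ _).2 (Or.inr (Or.inl ⟨rfl, rfl⟩))
  have hQp : (q₁.concat hax).IsPath := by
    rw [isPath_def, support_concat, hq₁s]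
    exact List.Nodup.append (hp₁.support_nodup.map Sum.inl_injective) (by simp)
      (List.disjoint_singleton.2 (by simp))
  rw [← hd' _ _ _ hQp, edges_concat, List.concat_eq_append, List.map_append, List.sum_append,
    hq₁e, sum_map_inl w' hw'old]
  have h1 : (List.map w p₁.edges).sum = d u x := hd u x p₁ hp₁
  rw [h1]
  simp [hw'x]

include hw'y in
lemma d'_mid_Y {u : V} (hu : ¬ onX T x y u) :
    d' (Sum.inl u) (Sum.inr ()) = d u y + ε := by
  obtain ⟨-, p₂, hp₂, hxp₂⟩ := sideY hT hw hd hxy hu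
  have he₂ : s(x, y) ∉ p₂.edges := fun hm => hxp₂ (p₂.fst_mem_support_of_mem_edges hm)
  obtain ⟨q₂, hq₂, hq₂s, hq₂e⟩ := lift_walk hT'adj p₂ hp₂ he₂
  have hay : T'.Adj (Sum.inl y) (Sum.inr ()) :=
    (hT'adj _ _).2 (Or.inr (Or.inr (Or.inr (Or.inl ⟨rfl, rfl⟩))))
  have hQp : (q₂.concat hay).IsPath := by
    rw [isPath_def, support_concat, hq₂s]
    exact List.Nodup.append (hp₂.support_nodup.map Sum.inl_injective) (by simp)
      (List.disjoint_singleton.2 (by simp))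
  rw [← hd' _ _ _ hQp, edges_concat, List.concat_eq_append, List.map_append, List.sum_append,
    hq₂e, sum_map_inl w' hw'old]
  have h1 : (List.map w p₂.edges).sum = d u y := hd u y p₂ hp₂
  rw [h1]
  simp [hw'y]

end dist
end ExpHelp

/-- Expanding an edge `xy` (with `x ∈ W₁`, `y ∈ U₁ \ W₁`) of a tree instance of the
Generalized Graphic Inverse Voronoi problem by `ε > 0`: any solution of the original
instance `I` is also a solution of the expanded instance `I'`.

The expanded tree `T'` lives on `V ⊕ Unit`, where `Sum.inr ()` is the subdivision vertex
`y'`; the edge `xy'` keeps the length of `xy` and the new edge `yy'` has length `ε`.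
`U'₁` consists of `y'` together with the vertices of `U₁` in the component of `T − y`
containing `x` (those `u` whose path to `x` avoids `y`); all other data is unchanged. -/
theorem expansion_preserves_solution
    {V : Type*} [Fintype V] (T : SimpleGraph V) (hT : T.IsTree)
    (w : Sym2 V → ℝ) (hw : ∀ e ∈ T.edgeSet, 0 < w e)
    (d : V → V → ℝ)
    (hd : ∀ (u v : V) (p : T.Walk u v), p.IsPath → (p.edges.map w).sum = d u v)
    (k : ℕ) (U S : Fin k → Set V)
    (hcover : (⋃ i, U i) = Set.univ)
    (i₀ : Fin k) (x y : V) (hxy : T.Adj x y)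
    (hx : x ∈ U i₀ \ ⋃ (j) (_ : j ≠ i₀), U j)
    (hyU : y ∈ U i₀) (hyW : y ∉ U i₀ \ ⋃ (j) (_ : j ≠ i₀), U j)
    (ε : ℝ) (hε : 0 < ε)
    -- the expanded tree `T'`
    (T' : SimpleGraph (V ⊕ Unit))
    (hT'adj : ∀ a b : V ⊕ Unit, T'.Adj a b ↔
      ((∃ u v : V, a = Sum.inl u ∧ b = Sum.inl v ∧ T.Adj u v ∧ s(u, v) ≠ s(x, y)) ∨
        (a = Sum.inl x ∧ b = Sum.inr ()) ∨ (a = Sum.inr () ∧ b = Sum.inl x) ∨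
        (a = Sum.inl y ∧ b = Sum.inr ()) ∨ (a = Sum.inr () ∧ b = Sum.inl y)))
    -- its edge-lengths
    (w' : Sym2 (V ⊕ Unit) → ℝ)
    (hw'old : ∀ u v : V, w' s(Sum.inl u, Sum.inl v) = w s(u, v))
    (hw'x : w' s(Sum.inl x, Sum.inr ()) = w s(x, y))
    (hw'y : w' s(Sum.inl y, Sum.inr ()) = ε)
    -- its tree distance
    (d' : V ⊕ Unit → V ⊕ Unit → ℝ)
    (hd' : ∀ (a b : V ⊕ Unit) (p : T'.Walk a b), p.IsPath → (p.edges.map w').sum = d' a b)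
    -- the modified cell `U'₁`
    (U₁' : Set (V ⊕ Unit))
    (hU₁' : U₁' = {Sum.inr ()} ∪
      Sum.inl '' {u | u ∈ U i₀ ∧ ∀ p : T.Walk u x, p.IsPath → y ∉ p.support})
    -- a solution of the original instance `I`
    (st : Fin k → V)
    (hsol : ∀ i, st i ∈ S i ∧ {v | ∀ j, d (st i) v ≤ d (st j) v} = U i) :
    ∀ i, (Sum.inl (st i) : V ⊕ Unit) ∈ (Sum.inl '' S i : Set (V ⊕ Unit)) ∧
      {a : V ⊕ Unit | ∀ j, d' (Sum.inl (st i)) a ≤ d' (Sum.inl (st j)) a} =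
        (if i = i₀ then U₁' else (Sum.inl '' U i : Set (V ⊕ Unit))) := by
  classical
  have hdw : ∀ (u v : V) (p : T.Walk u v), p.IsPath → ExpHelp.wsum w p = d u v := hd
  set X : V → Prop := ExpHelp.onX T x y with hXdef
  -- basic shortcuts
  have hwpos : 0 < w s(x, y) := hw _ (T.mem_edgeSet.2 hxy)
  have hU : ∀ (m : Fin k) (v : V), v ∈ U m ↔ ∀ j, d (st m) v ≤ d (st j) v := by
    intro m v; rw [← (hsol m).2]; rfl
  have hstrict : ∀ j, j ≠ i₀ → d (st i₀) x < d (st j) x := by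
    intro j hj
    have hx2 : x ∉ U j := by
      intro h
      exact hx.2 (Set.mem_iUnion.2 ⟨j, Set.mem_iUnion.2 ⟨hj, h⟩⟩)
    rw [hU j x] at hx2
    push_neg at hx2
    obtain ⟨m, hm⟩ := hx2
    exact lt_of_le_of_lt ((hU i₀ x).1 hx.1 m) hm
  obtain ⟨j₁, hj₁ne, hyUj₁⟩ : ∃ j₁, j₁ ≠ i₀ ∧ y ∈ U j₁ := by
    by_contra h
    push_neg at h
    refine hyW ⟨hyU, fun hm => ?_⟩
    obtain ⟨j, hj⟩ := Set.mem_iUnion.1 hm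
    obtain ⟨hjne, hjU⟩ := Set.mem_iUnion.1 hj
    exact h j hjne hjU
  have hyeq : d (st j₁) y = d (st i₀) y :=
    le_antisymm ((hU j₁ y).1 hyUj₁ i₀) ((hU i₀ y).1 hyU j₁)
  -- the site of i₀ is on the x-side
  have hX₀ : X (st i₀) := by
    by_contra h0
    have e2 := (ExpHelp.sideY hT hw hdw hxy h0).1
    have h3 := hstrict j₁ hj₁ne
    by_cases h1 : X (st j₁)
    · have e1 := ExpHelp.sideX hT hdw hxy h1
      linarith
    · have e1 := (ExpHelp.sideY hT hw hdw hxy h1).1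
      linarith
  have hsxy : d (st i₀) y = d (st i₀) x + w s(x, y) := ExpHelp.sideX hT hdw hxy hX₀
  -- the tying site j₁ is on the y-side
  have hYj₁ : ¬ X (st j₁) := by
    intro h1
    have e1 := ExpHelp.sideX hT hdw hxy h1
    have h3 := hstrict j₁ hj₁ne
    linarith
  -- key strict inequalities
  have key1 : ∀ (j : Fin k) (v : V), X v → ¬ X (st j) → d (st i₀) v < d (st j) v := by
    intro j v hXv hYj
    have hne : j ≠ i₀ := fun h => hYj (h ▸ hX₀)
    have e1 := ExpHelp.cross_d hT hdw hxy hXv hYj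
    have e2 := (ExpHelp.sideY hT hw hdw hxy hYj).1
    have h3 := hstrict j hne
    have tri := ExpHelp.d_triangle hT hw hdw (st i₀) x v
    have s1 := ExpHelp.d_symm hT hdw x v
    have s2 := ExpHelp.d_symm hT hdw (st j) y
    have s3 := ExpHelp.d_symm hT hdw (st j) v
    linarith
  have key2 : ∀ (j : Fin k) (v : V), ¬ X v → j ≠ i₀ → X (st j) → d (st i₀) v < d (st j) v := by
    intro j v hv hne hXj
    have e1 := ExpHelp.cross_d hT hdw hxy hX₀ hv
    have e2 := ExpHelp.cross_d hT hdw hxy hXj hv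
    have h3 := hstrict j hne
    linarith
  have key3 : ∀ v : V, ¬ X v → d (st i₀) v = d (st i₀) y + d y v := by
    intro v hv
    have e1 := ExpHelp.cross_d hT hdw hxy hX₀ hv
    linarith
  have keyj₁ : ∀ v : V, ¬ X v → d (st j₁) v ≤ d (st i₀) v := by
    intro v hv
    have tri := ExpHelp.d_triangle hT hw hdw (st j₁) y v
    rw [key3 v hv, ← hyeq]
    exact tri
  -- side containment of cells
  have hYside : ∀ i, ¬ X (st i) → ∀ v ∈ U i, ¬ X v := fun i hYi v hvU hXv =>
    absurd ((hU i v).1 hvU i₀) (not_le.2 (key1 i v hXv hYi))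
  have hXside : ∀ i, i ≠ i₀ → X (st i) → ∀ v ∈ U i, X v := by
    intro i hne hXi v hvU
    by_contra hYv
    exact absurd ((hU i v).1 hvU i₀) (not_le.2 (key2 i v hYv hne hXi))
  -- distances in the expanded tree
  have DX : ∀ a b : V, X a → X b → d' (Sum.inl a) (Sum.inl b) = d a b := fun a b ha hb =>
    ExpHelp.d'_same hT hw hdw hxy hT'adj hw'old hd' (iff_of_true ha hb)
  have DY : ∀ a b : V, ¬ X a → ¬ X b → d' (Sum.inl a) (Sum.inl b) = d a b := fun a b ha hb =>
    ExpHelp.d'_same hT hw hdw hxy hT'adj hw'old hd' (iff_of_false ha hb)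
  have DXY : ∀ a b : V, X a → ¬ X b → d' (Sum.inl a) (Sum.inl b) = d a b + ε := fun a b ha hb =>
    (ExpHelp.d'_cross hT hw hdw hxy hT'adj hw'old hw'x hw'y hd' ha hb).1
  have DYX : ∀ a b : V, ¬ X a → X b → d' (Sum.inl a) (Sum.inl b) = d a b + ε := by
    intro a b ha hb
    have h2 := (ExpHelp.d'_cross hT hw hdw hxy hT'adj hw'old hw'x hw'y hd' hb ha).2
    rw [h2, ExpHelp.d_symm hT hdw b a]
  have MX : ∀ a : V, X a → d' (Sum.inl a) (Sum.inr ()) = d a x + w s(x, y) := fun a ha =>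
    ExpHelp.d'_mid_X hT hw hdw hxy hT'adj hw'old hw'x hd' ha
  have MY : ∀ a : V, ¬ X a → d' (Sum.inl a) (Sum.inr ()) = d a y + ε := fun a ha =>
    ExpHelp.d'_mid_Y hT hw hdw hxy hT'adj hw'old hw'y hd' ha
  have Dge : ∀ (j : Fin k) (v : V), d (st j) v ≤ d' (Sum.inl (st j)) (Sum.inl v) := by
    intro j v
    by_cases hj : X (st j) <;> by_cases hv : X v
    · rw [DX _ _ hj hv]
    · rw [DXY _ _ hj hv]; linarith
    · rw [DYX _ _ hj hv]; linarith
    · rw [DY _ _ hj hv]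
  intro i
  refine ⟨⟨st i, (hsol i).1, rfl⟩, ?_⟩
  by_cases hii : i = i₀
  · subst hii
    rw [if_pos rfl, hU₁']
    ext a
    rcases a with v | u
    · simp only [Set.mem_setOf_eq, Set.mem_union, Set.mem_singleton_iff, Set.mem_image,
        reduceCtorEq, false_or]
      constructor
      · intro h
        by_cases hv : X v
        · refine ⟨v, ⟨?_, hv⟩, rfl⟩
          rw [hU i v]
          intro j
          by_cases hj : X (st j)
          · have hh := h j
            rwa [DX _ _ hX₀ hv, DX _ _ hj hv] at hh
          · exact (key1 j v hv hj).le
        · exfalso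
          have h1 := h j₁
          rw [DXY _ _ hX₀ hv, DY _ _ hYj₁ hv] at h1
          have h2 := keyj₁ v hv
          linarith
      · rintro ⟨u, ⟨huU, huX⟩, hequ⟩
        obtain rfl := Sum.inl_injective hequ
        intro j
        rw [DX _ _ hX₀ huX]
        exact le_trans ((hU i u).1 huU j) (Dge j u)
    · simp only [Set.mem_setOf_eq, Set.mem_union, Set.mem_singleton_iff, Set.mem_image]
      constructor
      · intro _; exact Or.inl trivial
      · intro _ j
        rw [MX _ hX₀]
        by_cases hj : X (st j)
        · rw [MX _ hj]
          rcases eq_or_ne j i with rfl | hne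
          · exact le_rfl
          · have := hstrict j hne
            linarith
        · rw [MY _ hj]
          have := (hU i y).1 hyU j
          linarith
  · rw [if_neg hii]
    ext a
    rcases a with v | u
    · simp only [Set.mem_setOf_eq, Set.mem_image]
      constructor
      · intro h
        refine ⟨v, ?_, rfl⟩
        by_contra hvU
        obtain ⟨j₀, hj₀⟩ : ∃ j₀, v ∈ U j₀ := by
          have : v ∈ ⋃ m, U m := by rw [hcover]; trivial
          exact Set.mem_iUnion.1 this
        have hlt : d (st j₀) v < d (st i) v := by
          rw [hU i v] at hvU
          push_neg at hvU
          obtain ⟨m, hm⟩ := hvU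
          exact lt_of_le_of_lt ((hU j₀ v).1 hj₀ m) hm
        by_cases hj₀X : X (st j₀)
        · by_cases hvX : X v
          · have e1 := DX _ _ hj₀X hvX
            have e2 := h j₀
            have e3 := Dge i v
            linarith
          · rcases eq_or_ne j₀ i₀ with rfl | hne
            · have e1 := DY _ _ hYj₁ hvX
              have e2 := keyj₁ v hvX
              have e3 := h j₁
              have e4 := Dge i v
              linarith
            · exact hvX (hXside j₀ hne hj₀X v hj₀)
        · have hvY : ¬ X v := hYside j₀ hj₀X v hj₀
          have e1 := DY _ _ hj₀X hvY
          have e2 := h j₀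
          have e3 := Dge i v
          linarith
      · rintro ⟨u, huU, hequ⟩
        obtain rfl := Sum.inl_injective hequ
        intro j
        by_cases hi : X (st i)
        · rw [DX _ _ hi (hXside i hii hi u huU)]
          exact le_trans ((hU i u).1 huU j) (Dge j u)
        · rw [DY _ _ hi (hYside i hi u huU)]
          exact le_trans ((hU i u).1 huU j) (Dge j u)
    · simp only [Set.mem_setOf_eq, Set.mem_image, reduceCtorEq, and_false, exists_false,
        iff_false]
      intro h
      have h0 := h i₀
      by_cases hi : X (st i)
      · rw [MX _ hX₀, MX _ hi] at h0
        have := hstrict i hii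
        linarith
      · rw [MX _ hX₀, MY _ hi] at h0
        have := (hU i₀ y).1 hyU i
        linarith
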